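/- arXiv:1506.04118 — 6 statements merged into one kernel-verified Lean document; each statement's English description precedes it below -/
import Mathlib

section
/- The cube [0,1]^n tiles ℝ^n by translations under the lattice Λ generated by a lower triangular matrix B with unit diagonal: the translates x + [0,1]^n for x ∈ Λ have pairwise disjoint interiors, and their union is all of ℝ^n. -/
open Matrix Finset

lemma sum_split (n : ℕ) (B : Matrix (Fin n) (Fin n) ℝ)
    (hdiag : ∀ i, B i i = 1) (hlower : ∀ i j : Fin n, i < j → B i j = 0)
    (v : Fin n → ℝ) (j : Fin n) :
    ∑ i, v i * B i j = v j + ∑ i ∈ Finset.univ.filter (fun i => j < i), v i * B i j := by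
  classical
  rw [← Finset.sum_filter_add_sum_filter_not Finset.univ (fun i => j < i)
    (fun i => v i * B i j)]
  have h1 : ∑ i ∈ Finset.univ.filter (fun i => ¬ j < i), v i * B i j = v j := by
    rw [Finset.sum_eq_single_of_mem j (by simp)]
    · rw [hdiag j, mul_one]
    · intro b hb hbj
      have hb' : b < j := lt_of_le_of_ne (not_lt.mp (Finset.mem_filter.mp hb).2) hbj
      rw [hlower b j hb', mul_zero]
  rw [h1, add_comm]

lemma latA (n : ℕ) (B : Matrix (Fin n) (Fin n) ℝ)
    (hdiag : ∀ i, B i i = 1) (hlower : ∀ i j : Fin n, i < j → B i j = 0)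
    (u : Fin n → ℤ)
    (h : ∀ j, |((fun i => (u i : ℝ)) ᵥ* B) j| < 1) : ∀ j, u j = 0 := by
  classical
  by_contra hc
  push_neg at hc
  obtain ⟨j0, hj0⟩ := hc
  set S : Finset (Fin n) := Finset.univ.filter (fun j => u j ≠ 0) with hS
  have hSne : S.Nonempty := ⟨j0, by simp [hS, hj0]⟩
  set j := S.max' hSne with hj
  have hjS : u j ≠ 0 := (Finset.mem_filter.mp (S.max'_mem hSne)).2
  have hval : ((fun i => (u i : ℝ)) ᵥ* B) j = (u j : ℝ) := by
    have : ((fun i => (u i : ℝ)) ᵥ* B) j = ∑ i, (u i : ℝ) * B i j := by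
      simp [Matrix.vecMul, dotProduct]
    rw [this, sum_split n B hdiag hlower]
    have : ∑ i ∈ Finset.univ.filter (fun i => j < i), (u i : ℝ) * B i j = 0 := by
      apply Finset.sum_eq_zero
      intro i hi
      have hji : j < i := (Finset.mem_filter.mp hi).2
      have : u i = 0 := by
        by_contra hui
        have : i ∈ S := by simp [hS, hui]
        exact absurd (S.le_max' i this) (not_le.mpr hji)
      simp [this]
    rw [this, add_zero]
  have h1 : |(u j : ℝ)| < 1 := hval ▸ h j
  have h2 : (1 : ℤ) ≤ |u j| := Int.one_le_abs hjS
  have : (1 : ℝ) ≤ |(u j : ℝ)| := by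
    rw [← Int.cast_abs]
    exact_mod_cast h2
  linarith

noncomputable def sol (n : ℕ) (B : Matrix (Fin n) (Fin n) ℝ) (y : Fin n → ℝ) : Fin n → ℤ :=
  fun j => ⌊y j - ∑ i ∈ (Finset.univ.filter (fun i => j < i)).attach,
      (sol n B y i.1 : ℝ) * B i.1 j⌋
termination_by j => n - j
decreasing_by
  rename_i j
  have h1 : (j : ℕ) < (i.1 : ℕ) := Fin.lt_def.mp (Finset.mem_filter.mp i.2).2
  omega

lemma sol_spec (n : ℕ) (B : Matrix (Fin n) (Fin n) ℝ)
    (hdiag : ∀ i, B i i = 1) (hlower : ∀ i j : Fin n, i < j → B i j = 0)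
    (y : Fin n → ℝ) (j : Fin n) :
    ((fun i => (sol n B y i : ℝ)) ᵥ* B) j ≤ y j ∧
      y j < ((fun i => (sol n B y i : ℝ)) ᵥ* B) j + 1 := by
  classical
  set u := sol n B y with hu
  set s := ∑ i ∈ Finset.univ.filter (fun i => j < i), (u i : ℝ) * B i j with hs
  have hfloor : u j = ⌊y j - s⌋ := by
    rw [hu]
    rw [sol]
    congr 1
    rw [Finset.sum_attach (Finset.univ.filter (fun i => j < i)) (fun i => (sol n B y i : ℝ) * B i j)]
  have hval : ((fun i => (u i : ℝ)) ᵥ* B) j = (⌊y j - s⌋ : ℝ) + s := by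
    have : ((fun i => (u i : ℝ)) ᵥ* B) j = ∑ i, (u i : ℝ) * B i j := by
      simp [Matrix.vecMul, dotProduct]
    rw [this, sum_split n B hdiag hlower, ← hs, ← hfloor]
  constructor
  · rw [hval]
    have := Int.floor_le (y j - s)
    linarith
  · rw [hval]
    have := Int.lt_floor_add_one (y j - s)
    linarith

theorem cube_is_lattice_tile (n : ℕ) (B : Matrix (Fin n) (Fin n) ℝ)
    (hdiag : ∀ i, B i i = 1) (hlower : ∀ i j : Fin n, i < j → B i j = 0) :
    (∀ x₁ ∈ {x : Fin n → ℝ | ∃ u : Fin n → ℤ, x = (fun i => (u i : ℝ)) ᵥ* B},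
     ∀ x₂ ∈ {x : Fin n → ℝ | ∃ u : Fin n → ℤ, x = (fun i => (u i : ℝ)) ᵥ* B},
      x₁ ≠ x₂ →
      Disjoint (interior ((x₁ + ·) '' Set.Icc (0 : Fin n → ℝ) 1))
               (interior ((x₂ + ·) '' Set.Icc (0 : Fin n → ℝ) 1))) ∧
    (⋃ x ∈ {x : Fin n → ℝ | ∃ u : Fin n → ℤ, x = (fun i => (u i : ℝ)) ᵥ* B},
       (x + ·) '' Set.Icc (0 : Fin n → ℝ) 1) = Set.univ := by
  classical
  have hint : ∀ x : Fin n → ℝ, interior ((x + ·) '' Set.Icc (0 : Fin n → ℝ) 1)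
      = (x + ·) '' interior (Set.Icc (0 : Fin n → ℝ) 1) := by
    intro x
    exact ((Homeomorph.addLeft x).image_interior (Set.Icc 0 1)).symm
  have hioo : interior (Set.Icc (0 : Fin n → ℝ) 1) = Set.pi Set.univ (fun i => Set.Ioo (0:ℝ) 1) := by
    rw [← Set.pi_univ_Icc, interior_pi_set Set.finite_univ]
    simp [interior_Icc]
  constructor
  · rintro x₁ ⟨u₁, rfl⟩ x₂ ⟨u₂, rfl⟩ hne
    rw [Set.disjoint_left]
    rintro y hy1 hy2
    rw [hint, hioo] at hy1 hy2
    obtain ⟨z₁, hz₁, hyz₁⟩ := hy1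
    obtain ⟨z₂, hz₂, hyz₂⟩ := hy2
    apply hne
    have key : ∀ j, u₁ j - u₂ j = 0 := by
      apply latA n B hdiag hlower
      intro j
      have hv : ((fun i => ((u₁ i - u₂ i : ℤ) : ℝ)) ᵥ* B) =
          ((fun i => (u₁ i : ℝ)) ᵥ* B) - ((fun i => (u₂ i : ℝ)) ᵥ* B) := by
        have hfun : (fun i => ((u₁ i - u₂ i : ℤ) : ℝ)) =
            (fun i => (u₁ i : ℝ)) - (fun i => (u₂ i : ℝ)) := by
          funext i
          simp
        rw [hfun, Matrix.sub_vecMul]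
      rw [hv]
      have e1 : ((fun i => (u₁ i : ℝ)) ᵥ* B) j = y j - z₁ j := by
        have := congrFun hyz₁ j
        simp only [Pi.add_apply] at this
        linarith [this]
      have e2 : ((fun i => (u₂ i : ℝ)) ᵥ* B) j = y j - z₂ j := by
        have := congrFun hyz₂ j
        simp only [Pi.add_apply] at this
        linarith [this]
      have hz1j := hz₁ j (Set.mem_univ j)
      have hz2j := hz₂ j (Set.mem_univ j)
      simp only [Set.mem_Ioo] at hz1j hz2j
      rw [Pi.sub_apply, e1, e2, abs_lt]
      constructor <;> linarith
    have : (fun i => (u₁ i : ℝ)) = (fun i => (u₂ i : ℝ)) := by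
      funext i
      have := key i
      have : u₁ i = u₂ i := by omega
      rw [this]
    rw [this]
  · rw [Set.eq_univ_iff_forall]
    intro y
    simp only [Set.mem_iUnion, Set.mem_setOf_eq]
    set u := sol n B y with hu
    refine ⟨(fun i => (u i : ℝ)) ᵥ* B, ⟨u, rfl⟩, y - (fun i => (u i : ℝ)) ᵥ* B, ?_, by simp⟩
    rw [Set.mem_Icc]
    constructor <;> intro j <;>
      obtain ⟨h1, h2⟩ := sol_spec n B hdiag hlower y j
    · simpa using h1
    · simp only [Pi.sub_apply, Pi.one_apply]
      linarith
end

section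
/- Let U be an upper triangular n×n matrix with unit diagonal and B a lower triangular n×n matrix with unit diagonal, and let Λ = {uB : u ∈ ℤ^n}. Then the parallelotope R = {αUB : α ∈ [0,1]^n} is a Λ-tile for ℝ^n: its Λ-translates have pairwise disjoint interiors and cover ℝ^n. -/
open Matrix

/-- Recursively solve for the fractional coordinates: `solA U y j` is the fractional
part of `y j` minus the contribution of earlier coordinates through `U`. -/
noncomputable def solA {n : ℕ} (U : Matrix (Fin n) (Fin n) ℝ) (y : Fin n → ℝ) :
    Fin n → ℝ
  | j => Int.fract (y j - ∑ i ∈ (Finset.Iio j).attach, solA U y i * U i j)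
  termination_by j => j.val
  decreasing_by exact Fin.lt_iff_val_lt_val.mp (Finset.mem_Iio.mp i.2)

lemma solA_spec {n : ℕ} (U : Matrix (Fin n) (Fin n) ℝ) (y : Fin n → ℝ) (j : Fin n) :
    solA U y j = Int.fract (y j - ∑ i ∈ Finset.Iio j, solA U y i * U i j) := by
  rw [solA]
  congr 1
  rw [Finset.sum_attach (Finset.Iio j) (fun i => solA U y i * U i j)]

lemma vecMul_coord {n : ℕ} (U : Matrix (Fin n) (Fin n) ℝ)
    (hUdiag : ∀ i, U i i = 1) (hUupper : ∀ i j : Fin n, j < i → U i j = 0)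
    (α : Fin n → ℝ) (j : Fin n) :
    (α ᵥ* U) j = α j + ∑ i ∈ Finset.Iio j, α i * U i j := by
  have h1 : (α ᵥ* U) j = ∑ i, α i * U i j := by
    simp [Matrix.vecMul, dotProduct]
  rw [h1]
  rw [← Finset.sum_subset (Finset.subset_univ (Finset.Iic j))
    (fun i _ hi => by
      rw [hUupper i j (by simpa using hi)]
      ring)]
  rw [← Finset.Iio_insert, Finset.sum_insert (by simp), hUdiag j]
  ring

/-- Key uniqueness: if two translates-by-integer-vector of open-cube points agree, the
integer vectors agree. -/
lemma unique_rep {n : ℕ} (U : Matrix (Fin n) (Fin n) ℝ)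
    (hUdiag : ∀ i, U i i = 1) (hUupper : ∀ i j : Fin n, j < i → U i j = 0)
    (u v : Fin n → ℤ) (α β : Fin n → ℝ)
    (hα : ∀ i, α i ∈ Set.Ioo (0:ℝ) 1) (hβ : ∀ i, β i ∈ Set.Ioo (0:ℝ) 1)
    (h : (fun i => (u i : ℝ)) + α ᵥ* U = (fun i => (v i : ℝ)) + β ᵥ* U) :
    u = v := by
  have key : ∀ m : ℕ, ∀ j : Fin n, j.val < m → (α j = β j ∧ u j = v j) := by
    intro m
    induction m with
    | zero => exact fun j hj => absurd hj (Nat.not_lt_zero _)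
    | succ m IH =>
      intro j hj
      have hj' := congrFun h j
      simp only [Pi.add_apply, vecMul_coord U hUdiag hUupper] at hj'
      have hsum : ∑ i ∈ Finset.Iio j, α i * U i j = ∑ i ∈ Finset.Iio j, β i * U i j := by
        refine Finset.sum_congr rfl fun i hi => ?_
        have hij : i < j := Finset.mem_Iio.mp hi
        have : i.val < m := by
          have := Fin.lt_iff_val_lt_val.mp hij
          omega
        rw [(IH i this).1]
      rw [hsum] at hj'
      have hd : α j - β j = ((v j - u j : ℤ) : ℝ) := by push_cast; linarith
      have h0 : v j - u j = 0 := by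
        have h1 : ((v j - u j : ℤ) : ℝ) < 1 := by
          rw [← hd]; have := (hα j).2; have := (hβ j).1; linarith
        have h2 : (-1 : ℝ) < ((v j - u j : ℤ) : ℝ) := by
          rw [← hd]; have := (hα j).1; have := (hβ j).2; linarith
        have h1' : v j - u j < 1 := by exact_mod_cast h1
        have h2' : -1 < v j - u j := by exact_mod_cast h2
        omega
      constructor
      · have hz0 : α j - β j = 0 := by rw [hd, h0]; simp
        linarith
      · omega
  funext j
  exact (key (j.val + 1) j (Nat.lt_succ_self _)).2

/-- Existence: every vector is an integer vector plus a cube point times `U`. -/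
lemma exists_rep {n : ℕ} (U : Matrix (Fin n) (Fin n) ℝ)
    (hUdiag : ∀ i, U i i = 1) (hUupper : ∀ i j : Fin n, j < i → U i j = 0)
    (y : Fin n → ℝ) :
    ∃ u : Fin n → ℤ, ∃ α ∈ Set.Icc (0 : Fin n → ℝ) 1,
      y = (fun i => (u i : ℝ)) + α ᵥ* U := by
  set α := solA U y with hαdef
  refine ⟨fun j => ⌊y j - ∑ i ∈ Finset.Iio j, α i * U i j⌋, α, ⟨?_, ?_⟩, ?_⟩
  · intro j
    rw [hαdef, solA_spec]
    exact Int.fract_nonneg _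
  · intro j
    rw [hαdef, solA_spec]
    exact le_of_lt (Int.fract_lt_one _)
  · funext j
    simp only [Pi.add_apply, vecMul_coord U hUdiag hUupper]
    have h1 : α j = Int.fract (y j - ∑ i ∈ Finset.Iio j, α i * U i j) := solA_spec U y j
    have h2 := Int.fract_add_floor (y j - ∑ i ∈ Finset.Iio j, α i * U i j)
    rw [h1]
    linarith

theorem parallelotope_is_lattice_tile (n : ℕ) (B U : Matrix (Fin n) (Fin n) ℝ)
    (hBdiag : ∀ i, B i i = 1) (hBlower : ∀ i j : Fin n, i < j → B i j = 0)
    (hUdiag : ∀ i, U i i = 1) (hUupper : ∀ i j : Fin n, j < i → U i j = 0) :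
    (∀ x₁ ∈ {x : Fin n → ℝ | ∃ u : Fin n → ℤ, x = (fun i => (u i : ℝ)) ᵥ* B},
     ∀ x₂ ∈ {x : Fin n → ℝ | ∃ u : Fin n → ℤ, x = (fun i => (u i : ℝ)) ᵥ* B},
      x₁ ≠ x₂ →
      Disjoint (interior ((x₁ + ·) '' ((fun α => α ᵥ* (U * B)) '' Set.Icc (0 : Fin n → ℝ) 1)))
               (interior ((x₂ + ·) '' ((fun α => α ᵥ* (U * B)) '' Set.Icc (0 : Fin n → ℝ) 1)))) ∧
    (⋃ x ∈ {x : Fin n → ℝ | ∃ u : Fin n → ℤ, x = (fun i => (u i : ℝ)) ᵥ* B},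
       (x + ·) '' ((fun α => α ᵥ* (U * B)) '' Set.Icc (0 : Fin n → ℝ) 1)) = Set.univ := by
  -- determinants
  have hBdet : B.det = 1 := by
    rw [Matrix.det_of_lowerTriangular B (fun i j hij => hBlower i j (by simpa using hij))]
    simp [hBdiag]
  have hUdet : U.det = 1 := by
    rw [Matrix.det_of_upperTriangular (fun i j (hij : (j:Fin n) < i) => hUupper i j hij)]
    simp [hUdiag]
  have hUBdet : (U * B).det = 1 := by rw [Matrix.det_mul, hBdet, hUdet]; ring
  have hBunit : IsUnit B.det := by rw [hBdet]; exact isUnit_one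
  have hUBunit : IsUnit (U * B).det := by rw [hUBdet]; exact isUnit_one
  -- injectivity of ᵥ* B
  have hBinj : Function.Injective (fun x : Fin n → ℝ => x ᵥ* B) := by
    intro a b hab
    have := congrArg (fun x => x ᵥ* B⁻¹) hab
    simpa [Matrix.vecMul_vecMul, Matrix.mul_nonsing_inv B hBunit] using this
  -- the linear homeomorphism given by right multiplication by U * B
  have hUBmul : (U * B) * (U * B)⁻¹ = 1 := Matrix.mul_nonsing_inv _ hUBunit
  have hUBmul' : (U * B)⁻¹ * (U * B) = 1 := Matrix.nonsing_inv_mul _ hUBunit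
  let le : (Fin n → ℝ) ≃ₗ[ℝ] (Fin n → ℝ) :=
    { toFun := fun x => x ᵥ* (U * B)
      invFun := fun x => x ᵥ* (U * B)⁻¹
      map_add' := fun x y => Matrix.add_vecMul _ x y
      map_smul' := fun c x => by simp [Matrix.smul_vecMul]
      left_inv := fun x => by simp [Matrix.vecMul_vecMul, hUBmul]
      right_inv := fun x => by simp [Matrix.vecMul_vecMul, hUBmul'] }
  let e : (Fin n → ℝ) ≃L[ℝ] (Fin n → ℝ) := le.toContinuousLinearEquiv
  -- interior of a translate of the tile
  have key : ∀ (f : (Fin n → ℝ) ≃ₜ (Fin n → ℝ)) (s : Set (Fin n → ℝ)),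
      interior (⇑f '' s) = ⇑f '' interior s := fun f s => (f.image_interior s).symm
  have hIcc : interior (Set.Icc (0 : Fin n → ℝ) 1)
      = Set.univ.pi fun _ => Set.Ioo (0:ℝ) 1 := by
    rw [← Set.pi_univ_Icc, interior_pi_set Set.finite_univ]
    simp [interior_Icc]
  have hinterior : ∀ x : Fin n → ℝ,
      interior ((x + ·) '' ((fun α => α ᵥ* (U * B)) '' Set.Icc (0 : Fin n → ℝ) 1))
        = (x + ·) '' ((fun α => α ᵥ* (U * B)) ''
            (Set.univ.pi fun _ => Set.Ioo (0:ℝ) 1)) := by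
    intro x
    show interior (⇑(Homeomorph.addLeft x) '' (⇑e.toHomeomorph '' Set.Icc 0 1))
        = ⇑(Homeomorph.addLeft x) '' (⇑e.toHomeomorph '' (Set.univ.pi fun _ => Set.Ioo (0:ℝ) 1))
    rw [key, key, hIcc]
  constructor
  · rintro x₁ ⟨u, rfl⟩ x₂ ⟨v, rfl⟩ hne
    rw [hinterior, hinterior, Set.disjoint_left]
    rintro z ⟨w, ⟨α, hα, rfl⟩, hz1⟩ ⟨w', ⟨β, hβ, rfl⟩, hz2⟩
    apply hne
    have heq : (fun i => (u i : ℝ)) ᵥ* B + α ᵥ* (U * B)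
        = (fun i => (v i : ℝ)) ᵥ* B + β ᵥ* (U * B) := hz1.trans hz2.symm
    have heq2 : ((fun i => (u i : ℝ)) + α ᵥ* U) ᵥ* B
        = ((fun i => (v i : ℝ)) + β ᵥ* U) ᵥ* B := by
      rw [Matrix.add_vecMul, Matrix.add_vecMul, Matrix.vecMul_vecMul, Matrix.vecMul_vecMul]
      exact heq
    have heq3 := hBinj heq2
    have huv : u = v := unique_rep U hUdiag hUupper u v α β
      (fun i => by have := hα i (Set.mem_univ i); simpa using this)
      (fun i => by have := hβ i (Set.mem_univ i); simpa using this) heq3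
    rw [huv]
  · ext z
    simp only [Set.mem_iUnion, Set.mem_setOf_eq, Set.mem_univ, iff_true]
    obtain ⟨u, α, hα, hy⟩ := exists_rep U hUdiag hUupper (z ᵥ* B⁻¹)
    refine ⟨(fun i => (u i : ℝ)) ᵥ* B, ⟨u, rfl⟩, ⟨α ᵥ* (U * B), ⟨α, hα, rfl⟩, ?_⟩⟩
    have hz : z = (z ᵥ* B⁻¹) ᵥ* B := by
      rw [Matrix.vecMul_vecMul, Matrix.nonsing_inv_mul B hBunit, Matrix.vecMul_one]
    show (fun i => (u i : ℝ)) ᵥ* B + α ᵥ* (U * B) = z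
    rw [hz, hy, Matrix.add_vecMul, Matrix.vecMul_vecMul]
end

section
/- For β ∈ ℝ, let b₁ = (1/(1+β²), -β/(1+β²)) and b₂ = (β,1), and let R = {α₁b₁ + α₂b₂ : α₁, α₂ ∈ [0,1]}. Then R is a Λ-tile for ℝ², where Λ is generated by (1,0) and (β,1). -/
noncomputable def fhom (β : ℝ) : (ℝ × ℝ) ≃ₜ (ℝ × ℝ) where
  toFun p := (p.1 - β * p.2, β * p.1 + p.2)
  invFun q := ((q.1 + β * q.2) / (1 + β ^ 2), (q.2 - β * q.1) / (1 + β ^ 2))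
  left_inv p := by
    have h : (1 : ℝ) + β ^ 2 ≠ 0 := by positivity
    apply Prod.ext <;> (simp only; field_simp; ring)
  right_inv q := by
    have h : (1 : ℝ) + β ^ 2 ≠ 0 := by positivity
    apply Prod.ext <;> (simp only; field_simp; ring)
  continuous_toFun := by fun_prop
  continuous_invFun := by fun_prop

lemma tile_eq (β : ℝ) :
    {p : ℝ × ℝ | ∃ α₁ ∈ Set.Icc (0:ℝ) 1, ∃ α₂ ∈ Set.Icc (0:ℝ) 1,
      p = (α₁ * (1 / (1 + β ^ 2)) + α₂ * β, α₁ * (-β / (1 + β ^ 2)) + α₂)}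
    = fhom β ⁻¹' (Set.Icc 0 1 ×ˢ Set.Icc 0 (1 + β ^ 2)) := by
  have hC : (0 : ℝ) < 1 + β ^ 2 := by positivity
  ext p
  simp only [Set.mem_setOf_eq, Set.mem_preimage, Set.mem_prod, Set.mem_Icc, fhom]
  constructor
  · rintro ⟨α₁, ⟨h10, h11⟩, α₂, ⟨h20, h21⟩, rfl⟩
    simp only [Homeomorph.homeomorph_mk_coe, Equiv.coe_fn_mk]
    constructor
    · have : α₁ * (1 / (1 + β ^ 2)) + α₂ * β - β * (α₁ * (-β / (1 + β ^ 2)) + α₂) = α₁ := by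
        field_simp; ring
      rw [this]; exact ⟨h10, h11⟩
    · have : β * (α₁ * (1 / (1 + β ^ 2)) + α₂ * β) + (α₁ * (-β / (1 + β ^ 2)) + α₂)
          = α₂ * (1 + β ^ 2) := by field_simp; ring
      rw [this]
      constructor
      · positivity
      · nlinarith
  · rintro ⟨⟨h10, h11⟩, ⟨h20, h21⟩⟩
    refine ⟨p.1 - β * p.2, ⟨h10, h11⟩, (β * p.1 + p.2) / (1 + β ^ 2), ⟨by positivity, ?_⟩, ?_⟩
    · rw [div_le_one hC]; exact h21
    · apply Prod.ext <;> (simp only; field_simp; ring)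

lemma fhom_add (β : ℝ) (x q : ℝ × ℝ) : fhom β (x + q) = fhom β x + fhom β q := by
  simp only [fhom, Homeomorph.homeomorph_mk_coe, Equiv.coe_fn_mk, Prod.fst_add, Prod.snd_add,
    Prod.mk_add_mk]
  exact Prod.ext (by ring) (by ring)

lemma mem_translate_iff (β : ℝ) (x p : ℝ × ℝ) (T : Set (ℝ × ℝ)) :
    p ∈ (x + ·) '' (fhom β ⁻¹' T) ↔ fhom β p - fhom β x ∈ T := by
  constructor
  · rintro ⟨q, hq, rfl⟩
    rw [fhom_add]; simpa using hq
  · intro h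
    refine ⟨p - x, ?_, by simp⟩
    have : p = x + (p - x) := by abel
    rw [this, fhom_add] at h
    simpa using h

lemma interior_translate (β : ℝ) (x : ℝ × ℝ) :
    interior ((x + ·) '' (fhom β ⁻¹' (Set.Icc 0 1 ×ˢ Set.Icc 0 (1 + β ^ 2))))
    = (x + ·) '' (fhom β ⁻¹' (Set.Ioo 0 1 ×ˢ Set.Ioo 0 (1 + β ^ 2))) := by
  have h1 : (x + ·) '' (fhom β ⁻¹' (Set.Icc 0 1 ×ˢ Set.Icc 0 (1 + β ^ 2)))
      = (Homeomorph.addLeft x) '' (fhom β ⁻¹' (Set.Icc 0 1 ×ˢ Set.Icc 0 (1 + β ^ 2))) := rfl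
  have h2 : (x + ·) '' (fhom β ⁻¹' (Set.Ioo 0 1 ×ˢ Set.Ioo 0 (1 + β ^ 2)))
      = (Homeomorph.addLeft x) '' (fhom β ⁻¹' (Set.Ioo 0 1 ×ˢ Set.Ioo 0 (1 + β ^ 2))) := rfl
  rw [h1, h2, ← Homeomorph.image_interior, ← Homeomorph.preimage_interior,
    interior_prod_eq, interior_Icc, interior_Icc]

lemma fhom_lattice (β : ℝ) (u₁ u₂ : ℤ) :
    fhom β ((u₁ : ℝ) + (u₂ : ℝ) * β, (u₂ : ℝ)) = ((u₁ : ℝ), β * u₁ + u₂ * (1 + β ^ 2)) := by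
  simp only [fhom, Homeomorph.homeomorph_mk_coe, Equiv.coe_fn_mk]
  exact Prod.ext (by ring) (by ring)

theorem rectangle_is_tile_dim2 (β : ℝ) :
    (∀ x₁ ∈ {x : ℝ × ℝ | ∃ u₁ u₂ : ℤ, x = (u₁ + u₂ * β, (u₂ : ℝ))},
     ∀ x₂ ∈ {x : ℝ × ℝ | ∃ u₁ u₂ : ℤ, x = (u₁ + u₂ * β, (u₂ : ℝ))},
      x₁ ≠ x₂ →
      Disjoint
        (interior ((x₁ + ·) ''
          {p : ℝ × ℝ | ∃ α₁ ∈ Set.Icc (0:ℝ) 1, ∃ α₂ ∈ Set.Icc (0:ℝ) 1,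
            p = (α₁ * (1 / (1 + β ^ 2)) + α₂ * β, α₁ * (-β / (1 + β ^ 2)) + α₂)}))
        (interior ((x₂ + ·) ''
          {p : ℝ × ℝ | ∃ α₁ ∈ Set.Icc (0:ℝ) 1, ∃ α₂ ∈ Set.Icc (0:ℝ) 1,
            p = (α₁ * (1 / (1 + β ^ 2)) + α₂ * β, α₁ * (-β / (1 + β ^ 2)) + α₂)}))) ∧
    (⋃ x ∈ {x : ℝ × ℝ | ∃ u₁ u₂ : ℤ, x = (u₁ + u₂ * β, (u₂ : ℝ))},
       (x + ·) '' {p : ℝ × ℝ | ∃ α₁ ∈ Set.Icc (0:ℝ) 1, ∃ α₂ ∈ Set.Icc (0:ℝ) 1,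
          p = (α₁ * (1 / (1 + β ^ 2)) + α₂ * β, α₁ * (-β / (1 + β ^ 2)) + α₂)}) = Set.univ := by
  have hC : (0 : ℝ) < 1 + β ^ 2 := by positivity
  rw [tile_eq]
  constructor
  · rintro x₁ ⟨u₁, u₂, rfl⟩ x₂ ⟨v₁, v₂, rfl⟩ hne
    rw [interior_translate, interior_translate, Set.disjoint_left]
    intro p hp1 hp2
    rw [mem_translate_iff, fhom_lattice] at hp1 hp2
    simp only [Set.mem_prod, Set.mem_Ioo, Prod.fst_sub, Prod.snd_sub] at hp1 hp2
    obtain ⟨⟨ha1, ha2⟩, ⟨hb1, hb2⟩⟩ := hp1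
    obtain ⟨⟨ha1', ha2'⟩, ⟨hb1', hb2'⟩⟩ := hp2
    have h1 : u₁ = v₁ := by
      have e1 : (u₁ : ℝ) < v₁ + 1 := by linarith
      have e2 : (v₁ : ℝ) < u₁ + 1 := by linarith
      have e1' : u₁ < v₁ + 1 := by exact_mod_cast e1
      have e2' : v₁ < u₁ + 1 := by exact_mod_cast e2
      omega
    subst h1
    have h2 : u₂ = v₂ := by
      have e1 : (u₂ : ℝ) < v₂ + 1 := by nlinarith
      have e2 : (v₂ : ℝ) < u₂ + 1 := by nlinarith
      have e1' : u₂ < v₂ + 1 := by exact_mod_cast e1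
      have e2' : v₂ < u₂ + 1 := by exact_mod_cast e2
      omega
    subst h2
    exact hne rfl
  · rw [Set.eq_univ_iff_forall]
    intro p
    set a := (fhom β p).1 with ha
    set b := (fhom β p).2 with hb
    set u₁ : ℤ := ⌊a⌋ with hu₁
    set u₂ : ℤ := ⌊(b - β * u₁) / (1 + β ^ 2)⌋ with hu₂
    simp only [Set.mem_iUnion, Set.mem_setOf_eq, exists_prop]
    refine ⟨((u₁ : ℝ) + (u₂ : ℝ) * β, (u₂ : ℝ)), ⟨u₁, u₂, rfl⟩, ?_⟩
    rw [mem_translate_iff, fhom_lattice]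
    simp only [Set.mem_prod, Set.mem_Icc, Prod.fst_sub, Prod.snd_sub]
    have hf1 : (u₁ : ℝ) ≤ a := Int.floor_le a
    have hf2 : a < u₁ + 1 := Int.lt_floor_add_one a
    have hg1 : (u₂ : ℝ) ≤ (b - β * u₁) / (1 + β ^ 2) := Int.floor_le _
    have hg2 : (b - β * u₁) / (1 + β ^ 2) < u₂ + 1 := Int.lt_floor_add_one _
    have hg1' : (u₂ : ℝ) * (1 + β ^ 2) ≤ b - β * u₁ := by
      rw [← le_div_iff₀ hC]; exact hg1
    have hg2' : b - β * u₁ < ((u₂ : ℝ) + 1) * (1 + β ^ 2) := by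
      rw [← div_lt_iff₀ hC]; exact hg2
    refine ⟨⟨by linarith, by linarith⟩, ⟨by linarith, by nlinarith⟩⟩
end

section
/- With B and r₁,…,rₙ as in the Montucla generalization, for each j < n the row b_j of B is orthogonal to r_i for all i > j+1, i.e., ⟨b_j, r_i⟩ = 0 whenever i > j+1. -/
open scoped RealInnerProductSpace

theorem row_orthogonal_to_far_gs_vectors (n : ℕ) (a : Fin n → ℝ) (ha : ∀ i, 0 < a i)
    (hmono : Monotone a) (hprod : ∏ i, a i = 1)
    (b : Fin n → EuclideanSpace ℝ (Fin n))
    (hb : ∀ i j : Fin n, b i j =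
      if i = j then 1
      else if (i : ℕ) = (j : ℕ) + 1 then
        Real.sqrt ((∏ k ∈ Finset.Ici j, (a k) ^ 2) - 1) / ∏ k ∈ Finset.Ioi j, a k
      else 0)
    (r : Fin n → EuclideanSpace ℝ (Fin n))
    (hr : ∀ i, r i = b i - ∑ j ∈ Finset.Ioi i, (⟪b i, r j⟫ / ⟪r j, r j⟫) • r j) :
    ∀ j i : Fin n, (j : ℕ) + 1 < (i : ℕ) → ⟪b j, r i⟫ = 0 := by
  have key : ∀ N : ℕ, ∀ i : Fin n, n - (i : ℕ) ≤ N →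
      ∀ m : Fin n, (m : ℕ) + 1 < (i : ℕ) → r i m = 0 := by
    intro N
    induction N with
    | zero =>
      intro i hi m hm
      have := i.isLt
      omega
    | succ N ih =>
      intro i hi m hm
      have hps : ∀ (m : Fin n) (s : Finset (Fin n)) (v : Fin n → EuclideanSpace ℝ (Fin n)),
          (∑ k ∈ s, v k) m = ∑ k ∈ s, v k m := fun m s v =>
        map_sum (PiLp.projₗ (𝕜 := ℝ) 2 (fun _ : Fin n => ℝ) m) v s
      rw [hr i]
      rw [PiLp.sub_apply, hps]
      simp only [PiLp.smul_apply, smul_eq_mul]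
      have hbim : b i m = 0 := by
        rw [hb i m]
        have h1 : i ≠ m := by
          intro h; rw [h] at hm; omega
        have h2 : (i : ℕ) ≠ (m : ℕ) + 1 := by omega
        simp [h1, h2]
      rw [hbim]
      have hsum : ∑ k ∈ Finset.Ioi i, (⟪b i, r k⟫ / ⟪r k, r k⟫) * r k m = 0 := by
        apply Finset.sum_eq_zero
        intro k hk
        have hki : i < k := Finset.mem_Ioi.mp hk
        have hki' : (i : ℕ) < (k : ℕ) := hki
        have hk0 : r k m = 0 := by
          apply ih k (by omega) m (by omega)
        rw [hk0, mul_zero]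
      rw [hsum, sub_zero]
  intro j i hji
  rw [PiLp.inner_apply]
  apply Finset.sum_eq_zero
  intro m _
  by_cases hm : (m : ℕ) + 1 < (i : ℕ)
  · rw [key n i (by omega) m hm]
    simp
  · have hmj : (j : ℕ) < (m : ℕ) := by omega
    have hbjm : b j m = 0 := by
      rw [hb j m]
      have h1 : j ≠ m := by
        intro h; rw [h] at hmj; omega
      have h2 : (j : ℕ) ≠ (m : ℕ) + 1 := by omega
      simp [h1, h2]
    rw [hbjm]
    simp
end

section
/- Two tile theorem: if P and Q are polytopes in ℝ^n and Λ is a lattice such that both P and Q are Λ-tiles for ℝ^n (their Λ-translates have pairwise disjoint interiors and cover ℝ^n), then P and Q are equidissectable, with pieces given by the nonempty intersections P ∩ (x + Q), x ∈ Λ. -/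
open Matrix
open Pointwise

theorem two_tile_theorem (n : ℕ) (B : Matrix (Fin n) (Fin n) ℝ) (hB : IsUnit B.det)
    (Λ : Set (Fin n → ℝ)) (hΛ : Λ = {x | ∃ u : Fin n → ℤ, x = (fun i => (u i : ℝ)) ᵥ* B})
    (P Q : Set (Fin n → ℝ))
    (hP : ∃ S : Finset (Fin n → ℝ), P = convexHull ℝ (S : Set _))
    (hQ : ∃ S : Finset (Fin n → ℝ), Q = convexHull ℝ (S : Set _))
    (hPdisj : ∀ x₁ ∈ Λ, ∀ x₂ ∈ Λ, x₁ ≠ x₂ →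
      Disjoint (interior ((x₁ + ·) '' P)) (interior ((x₂ + ·) '' P)))
    (hPcover : (⋃ x ∈ Λ, (x + ·) '' P) = Set.univ)
    (hQdisj : ∀ x₁ ∈ Λ, ∀ x₂ ∈ Λ, x₁ ≠ x₂ →
      Disjoint (interior ((x₁ + ·) '' Q)) (interior ((x₂ + ·) '' Q)))
    (hQcover : (⋃ x ∈ Λ, (x + ·) '' Q) = Set.univ) :
    {x ∈ Λ | (P ∩ (x + ·) '' Q).Nonempty}.Finite ∧
    (⋃ x ∈ Λ, P ∩ (x + ·) '' Q) = P ∧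
    (⋃ x ∈ Λ, (-x + ·) '' (P ∩ (x + ·) '' Q)) = Q ∧
    (∀ x₁ ∈ Λ, ∀ x₂ ∈ Λ, x₁ ≠ x₂ →
      Disjoint (interior (P ∩ (x₁ + ·) '' Q)) (interior (P ∩ (x₂ + ·) '' Q))) ∧
    (∀ x₁ ∈ Λ, ∀ x₂ ∈ Λ, x₁ ≠ x₂ →
      Disjoint (interior ((-x₁ + ·) '' (P ∩ (x₁ + ·) '' Q)))
               (interior ((-x₂ + ·) '' (P ∩ (x₂ + ·) '' Q)))) := by
  -- Λ is closed under negation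
  have hNeg : ∀ x ∈ Λ, -x ∈ Λ := by
    intro x hx
    rw [hΛ] at hx ⊢
    obtain ⟨u, rfl⟩ := hx
    refine ⟨-u, ?_⟩
    have hc : (fun i => ((-u) i : ℝ)) = -(fun i => (u i : ℝ)) := by
      funext i; push_cast; simp
    rw [hc, Matrix.neg_vecMul]
  -- key rewriting for translated intersections
  have key : ∀ x : Fin n → ℝ, (-x + ·) '' (P ∩ (x + ·) '' Q) = ((-x + ·) '' P) ∩ Q := by
    intro x
    rw [Set.image_inter (add_right_injective (-x))]
    congr 1
    rw [← Set.image_comp]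
    convert Set.image_id Q
    funext y
    simp
  constructor
  · -- finiteness
    obtain ⟨SP, hSP⟩ := hP
    obtain ⟨SQ, hSQ⟩ := hQ
    have hPc : IsCompact P := hSP ▸ SP.finite_toSet.isCompact_convexHull (𝕜 := ℝ)
    have hQc : IsCompact Q := hSQ ▸ SQ.finite_toSet.isCompact_convexHull (𝕜 := ℝ)
    have hKc : IsCompact (P - Q) := by
      rw [sub_eq_add_neg]; exact hPc.add hQc.neg
    have hcont : Continuous fun y : Fin n → ℝ => y ᵥ* B⁻¹ := by
      have : (fun y : Fin n → ℝ => y ᵥ* B⁻¹) = (Matrix.vecMulLinear B⁻¹ : _ → _) := by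
        funext y; simp
      rw [this]
      exact (Matrix.vecMulLinear B⁻¹).continuous_of_finiteDimensional
    have hKc2 : IsCompact ((fun y : Fin n → ℝ => y ᵥ* B⁻¹) '' (P - Q)) := hKc.image hcont
    obtain ⟨M, hM⟩ := hKc2.isBounded.exists_norm_le
    refine Set.Finite.subset (Set.Finite.image
      (fun u : Fin n → ℤ => (fun i => (u i : ℝ)) ᵥ* B)
      (Set.finite_Icc (fun _ : Fin n => -⌈M⌉) fun _ => ⌈M⌉)) ?_
    rintro x ⟨hxΛ, p, hpP, q, hqQ, hpq⟩
    rw [hΛ] at hxΛ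
    obtain ⟨u, rfl⟩ := hxΛ
    have hxK : (fun i => (u i : ℝ)) ᵥ* B ∈ P - Q := ⟨p, hpP, q, hqQ, by simp [← hpq]⟩
    have hu : ((fun i => (u i : ℝ)) ᵥ* B) ᵥ* B⁻¹ = fun i => (u i : ℝ) := by
      rw [Matrix.vecMul_vecMul, Matrix.mul_nonsing_inv B hB, Matrix.vecMul_one]
    have hub : ‖fun i => (u i : ℝ)‖ ≤ M := by
      have := hM _ (Set.mem_image_of_mem _ hxK)
      rwa [hu] at this
    refine ⟨u, ?_, rfl⟩
    rw [Set.mem_Icc]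
    constructor <;> intro i
    · have h1 : |(u i : ℝ)| ≤ M := by
        calc |(u i : ℝ)| = ‖(fun i => (u i : ℝ)) i‖ := rfl
        _ ≤ _ := by simpa using norm_le_pi_norm (fun j => ((u j : ℝ))) i
        _ ≤ M := hub
      have : -M ≤ (u i : ℝ) := neg_le_of_abs_le h1
      have h2 : ((-⌈M⌉ : ℤ) : ℝ) ≤ (u i : ℝ) := le_trans (by push_cast; linarith [Int.le_ceil M]) this
      exact_mod_cast h2
    · have h1 : |(u i : ℝ)| ≤ M := by
        calc |(u i : ℝ)| = ‖(fun i => (u i : ℝ)) i‖ := rfl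
        _ ≤ _ := by simpa using norm_le_pi_norm (fun j => ((u j : ℝ))) i
        _ ≤ M := hub
      have : (u i : ℝ) ≤ M := le_of_abs_le h1
      have h2 : (u i : ℝ) ≤ ((⌈M⌉ : ℤ) : ℝ) := le_trans this (by exact_mod_cast Int.le_ceil M)
      exact_mod_cast h2
  refine ⟨?_, ?_, ?_, ?_⟩
  · rw [← Set.inter_iUnion₂, hQcover, Set.inter_univ]
  · -- second cover
    have hcov : (⋃ x ∈ Λ, (-x + ·) '' P) = Set.univ := by
      apply Set.eq_univ_of_univ_subset
      rw [← hPcover]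
      refine Set.iUnion₂_subset fun y hy => ?_
      refine Set.subset_iUnion₂_of_subset (-y) (hNeg y hy) ?_
      rw [neg_neg]
    calc (⋃ x ∈ Λ, (-x + ·) '' (P ∩ (x + ·) '' Q))
        = ⋃ x ∈ Λ, ((-x + ·) '' P) ∩ Q := by
          apply Set.iUnion₂_congr; intro x _; exact key x
      _ = (⋃ x ∈ Λ, (-x + ·) '' P) ∩ Q := by rw [Set.iUnion₂_inter]
      _ = Q := by rw [hcov, Set.univ_inter]
  · intro x₁ h₁ x₂ h₂ hne
    exact (hQdisj x₁ h₁ x₂ h₂ hne).mono (interior_mono Set.inter_subset_right)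
      (interior_mono Set.inter_subset_right)
  · intro x₁ h₁ x₂ h₂ hne
    rw [key x₁, key x₂]
    exact (hPdisj (-x₁) (hNeg _ h₁) (-x₂) (hNeg _ h₂) (by simpa using hne)).mono
      (interior_mono Set.inter_subset_left) (interior_mono Set.inter_subset_left)
end

section
/- In Algorithm 'Cube-to-Brick', given x ∈ [0,1]^n, set x̄ = xB⁻¹A, and define u ∈ ℤ^n by u₁ = ⌊x̄₁⌋ and u_j = ⌊x̄_j − u_{j−1} a_{j−1,j}⌋ for j ≥ 2. Then x̄ − uA ∈ [0,1]^n, and consequently y = x − uB lies in the realization R = {αR : α ∈ [0,1]^n} of the brick. -/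
open Matrix

theorem cube_to_brick_algorithm_correct (n : ℕ) (a : Fin n → ℝ)
    (ha : ∀ i, 0 < a i) (hmono : Monotone a) (hprod : ∏ i, a i = 1)
    (B A : Matrix (Fin n) (Fin n) ℝ)
    (hB : ∀ i j : Fin n, B i j =
      if i = j then 1
      else if (i : ℕ) = (j : ℕ) + 1 then
        Real.sqrt ((∏ k ∈ Finset.Ici j, (a k) ^ 2) - 1) / ∏ k ∈ Finset.Ioi j, a k
      else 0)
    (hA : ∀ i j : Fin n, A i j =
      if i = j then 1
      else if (j : ℕ) = (i : ℕ) + 1 then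
        Real.sqrt ((∏ k ∈ Finset.Ici j, (a k) ^ 2) - 1) /
          ((a j) ^ 2 * ∏ k ∈ Finset.Ioi j, a k)
      else 0)
    (x : Fin n → ℝ) (hx : x ∈ Set.Icc (0 : Fin n → ℝ) 1)
    (xbar : Fin n → ℝ) (hxbar : xbar = (x ᵥ* B⁻¹) ᵥ* A)
    (u : Fin n → ℤ)
    (hu0 : ∀ h : 0 < n, u ⟨0, h⟩ = ⌊xbar ⟨0, h⟩⌋)
    (hus : ∀ (j : ℕ) (hj : j + 1 < n),
      u ⟨j + 1, hj⟩ = ⌊xbar ⟨j + 1, hj⟩ -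
        (u ⟨j, Nat.lt_of_succ_lt hj⟩ : ℝ) *
          A ⟨j, Nat.lt_of_succ_lt hj⟩ ⟨j + 1, hj⟩⌋) :
    (xbar - (fun i => (u i : ℝ)) ᵥ* A) ∈ Set.Icc (0 : Fin n → ℝ) 1 ∧
    ∃ α ∈ Set.Icc (0 : Fin n → ℝ) 1,
      x - (fun i => (u i : ℝ)) ᵥ* B = α ᵥ* (A⁻¹ * B) := by
  -- A is upper triangular with unit diagonal, B is lower triangular with unit diagonal
  have hAzero : ∀ i j : Fin n, (j : ℕ) < (i : ℕ) → A i j = 0 := by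
    intro i j h
    rw [hA]
    rw [if_neg, if_neg]
    · omega
    · intro he; rw [he] at h; omega
  have hBzero : ∀ i j : Fin n, (i : ℕ) < (j : ℕ) → B i j = 0 := by
    intro i j h
    rw [hB]
    rw [if_neg, if_neg]
    · omega
    · intro he; rw [he] at h; omega
  have hAdiag : ∀ i : Fin n, A i i = 1 := by intro i; rw [hA]; simp
  have hBdiag : ∀ i : Fin n, B i i = 1 := by intro i; rw [hB]; simp
  have hAdet : A.det = 1 := by
    rw [Matrix.det_of_upperTriangular (fun i j h => hAzero i j h)]
    simp [hAdiag]
  have hBdet : B.det = 1 := by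
    rw [Matrix.det_of_lowerTriangular B (fun i j h => hBzero i j h)]
    simp [hBdiag]
  have hAu : IsUnit A.det := by rw [hAdet]; exact isUnit_one
  have hBu : IsUnit B.det := by rw [hBdet]; exact isUnit_one
  -- compute the vecMul componentwise
  have hS : ∀ j : Fin n, 0 ≤ xbar j - ((fun i => (u i : ℝ)) ᵥ* A) j ∧
      xbar j - ((fun i => (u i : ℝ)) ᵥ* A) j ≤ 1 := by
    intro j
    have hsum : ((fun i => (u i : ℝ)) ᵥ* A) j = ∑ i, (u i : ℝ) * A i j := by
      simp [Matrix.vecMul, dotProduct]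
    obtain ⟨jv, hj⟩ := j
    cases jv with
    | zero =>
      have : ((fun i => (u i : ℝ)) ᵥ* A) ⟨0, hj⟩ = (u ⟨0, hj⟩ : ℝ) := by
        rw [hsum, Finset.sum_eq_single ⟨0, hj⟩]
        · rw [hAdiag, mul_one]
        · intro b _ hb
          rw [hAzero b ⟨0, hj⟩, mul_zero]
          have hbne : (b : ℕ) ≠ 0 := fun h => hb (Fin.ext h)
          show ((⟨0, hj⟩ : Fin n) : ℕ) < (b : ℕ)
          rw [show ((⟨0, hj⟩ : Fin n) : ℕ) = 0 from rfl]
          omega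
        · simp
      rw [this, hu0 hj]
      constructor
      · have := Int.floor_le (xbar ⟨0, hj⟩); linarith
      · have := Int.lt_floor_add_one (xbar ⟨0, hj⟩); linarith
    | succ k =>
      have hk : k < n := Nat.lt_of_succ_lt hj
      set p : Fin n := ⟨k, hk⟩
      set q : Fin n := ⟨k + 1, hj⟩
      have hpq : p ≠ q := by
        intro h; exact absurd (congrArg Fin.val h) (by simp [p, q])
      have : ((fun i => (u i : ℝ)) ᵥ* A) q =
          (u q : ℝ) + (u p : ℝ) * A p q := by
        rw [hsum, ← Finset.add_sum_erase _ _ (Finset.mem_univ q), hAdiag, mul_one]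
        congr 1
        rw [Finset.sum_eq_single_of_mem p
          (Finset.mem_erase.mpr ⟨hpq, Finset.mem_univ p⟩)]
        intro b _ hb
        have hbq : b ≠ q := (Finset.mem_erase.mp ‹b ∈ _›).1
        have h1 : (b : ℕ) ≠ k := fun h => hb (Fin.ext h)
        rw [hA, if_neg hbq, if_neg, mul_zero]
        show ¬ ((q : Fin n) : ℕ) = (b : ℕ) + 1
        rw [show ((q : Fin n) : ℕ) = k + 1 from rfl]
        omega
      rw [this]
      have hfloor := hus k hj
      set t := xbar q - (u p : ℝ) * A p q with ht
      have hut : (u q : ℝ) = (⌊t⌋ : ℝ) := by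
        rw [hfloor]
      constructor
      · have := Int.floor_le t; rw [hut]; simp only [ht] at this ⊢; linarith
      · have := Int.lt_floor_add_one t; rw [hut]; simp only [ht] at this ⊢; linarith
  constructor
  · rw [Set.mem_Icc]
    constructor <;> intro j
    · simpa using (hS j).1
    · simpa using (hS j).2
  · refine ⟨xbar - (fun i => (u i : ℝ)) ᵥ* A, ?_, ?_⟩
    · rw [Set.mem_Icc]
      constructor <;> intro j
      · simpa using (hS j).1
      · simpa using (hS j).2
    · rw [← Matrix.vecMul_vecMul, Matrix.sub_vecMul, Matrix.vecMul_vecMul,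
        Matrix.mul_nonsing_inv A hAu, Matrix.vecMul_one, hxbar,
        Matrix.vecMul_vecMul (x ᵥ* B⁻¹) A A⁻¹,
        Matrix.mul_nonsing_inv A hAu, Matrix.vecMul_one,
        Matrix.sub_vecMul, Matrix.vecMul_vecMul, Matrix.nonsing_inv_mul B hBu,
        Matrix.vecMul_one]
end
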